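/- For the graph T'_k(∞), liminf_{n→∞} e(G_n)/n² ≥ (1/4)(1 - 1/k), where G_n is the induced subgraph on {1,...,n}. -/

import Mathlib

open scoped Classical

/-- The residue of `m` modulo `k`, taken in `{1, ..., k}`. -/
def res (k m : ℕ) : ℕ := if m % k = 0 then k else m % k

/-- The graph `T'_k(∞)` on `ℕ`: `s` is adjacent to `t` iff `s < t` and the residue of `s`
mod `k` (taken in `{1,...,k}`) is strictly less than that of `t`. -/
def Tk' (k : ℕ) : SimpleGraph ℕ where
  Adj s t := (s < t ∧ res k s < res k t) ∨ (t < s ∧ res k t < res k s)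
  symm := by constructor; intro s t h; tauto
  loopless := by constructor; intro s h; rcases h with ⟨h, -⟩ | ⟨h, -⟩ <;> exact lt_irrefl s h

/-- Number of edges of `G` inside a finite set `s` of vertices (unordered pairs). -/
noncomputable def edgesIn (G : SimpleGraph ℕ) (s : Finset ℕ) : ℕ :=
  ((s ×ˢ s).filter fun p => p.1 < p.2 ∧ G.Adj p.1 p.2).card

/-- `e(G_n)`: number of edges of the subgraph of `G` induced by `{1, ..., n}`. -/
noncomputable def eG (G : SimpleGraph ℕ) (n : ℕ) : ℕ := edgesIn G (Finset.Icc 1 n)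

open Finset

lemma card_pairs (m : ℕ) :
    2 * ((range m ×ˢ range m).filter fun p : ℕ×ℕ => p.1 < p.2).card = m * (m - 1) := by
  have h : ((range m ×ˢ range m).filter fun p : ℕ×ℕ => p.1 < p.2).card = ∑ j ∈ range m, j := by
    rw [Finset.card_eq_sum_card_fiberwise (f := Prod.snd) (t := range m)
      (by intro p hp; simp only [mem_coe, mem_filter, mem_product] at hp ⊢; exact hp.1.2)]
    apply Finset.sum_congr rfl
    intro j hj
    have he : (((range m ×ˢ range m).filter fun p : ℕ×ℕ => p.1 < p.2).filter fun p => p.2 = j)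
        = (range j).image fun i => (i, j) := by
      ext ⟨a,b⟩
      simp only [mem_filter, mem_product, mem_range, mem_image]
      constructor
      · rintro ⟨⟨⟨ha, hb⟩, hab⟩, rfl⟩; exact ⟨a, hab, rfl⟩
      · rintro ⟨i, hi, h⟩
        rw [Prod.mk.injEq] at h
        obtain ⟨rfl, rfl⟩ := h
        simp only [mem_range] at hj
        exact ⟨⟨⟨lt_trans hi hj, hj⟩, hi⟩, rfl⟩
    rw [he, Finset.card_image_of_injective _ (by intro a b h; simpa using h), card_range]
  rw [h, mul_comm, Finset.sum_range_id_mul_two]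

lemma res_block (k i r : ℕ) (h1 : 1 ≤ r) (h2 : r ≤ k) : res k (i * k + r) = r := by
  unfold res
  rcases eq_or_lt_of_le h2 with rfl | hlt
  · have : (i * r + r) % r = 0 := by
      simp [Nat.add_mul_mod_self_right, Nat.add_mul_mod_self_left, Nat.add_mod_right]
    simp [this]
  · have hm : (i * k + r) % k = r := by
      rw [Nat.add_comm, Nat.add_mul_mod_self_right]
      exact Nat.mod_eq_of_lt hlt
    rw [hm, if_neg (by omega)]

lemma eG_lower (k n : ℕ) (hk : 1 ≤ k) :
    k * (k - 1) * ((n / k + 1) * (n / k)) ≤ 4 * eG (Tk' k) n := by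
  classical
  set q := n / k with hq
  set P : Finset (ℕ × ℕ) := (range k ×ˢ range k).filter (fun p => p.1 < p.2) with hP
  set Q : Finset (ℕ × ℕ) := (range (q+1) ×ˢ range (q+1)).filter (fun p => p.1 < p.2) with hQ
  have key : (P ×ˢ Q).card ≤ eG (Tk' k) n := by
    apply Finset.card_le_card_of_injOn
      (fun x => (x.2.1 * k + x.1.1 + 1, (x.2.2 - 1) * k + x.1.2 + 1))
    · rintro ⟨⟨a, b⟩, ⟨i, j⟩⟩ hx
      simp only [hP, hQ, Finset.mem_coe, Finset.mem_product, Finset.mem_filter, Finset.mem_range] at hx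
      obtain ⟨⟨⟨ha, hb⟩, hab⟩, ⟨⟨hi, hj⟩, hij⟩⟩ := hx
      have hqk : q * k ≤ n := Nat.div_mul_le_self n k
      have hj1 : 1 ≤ j := by omega
      have hress : res k (i * k + a + 1) = a + 1 := by
        have h := res_block k i (a+1) (by omega) (by omega)
        rwa [← Nat.add_assoc] at h
      have hrest : res k ((j-1) * k + b + 1) = b + 1 := by
        have h := res_block k (j-1) (b+1) (by omega) (by omega)
        rwa [← Nat.add_assoc] at h
      have hile : i * k ≤ (j - 1) * k := Nat.mul_le_mul_right k (by omega)
      have hjle : (j - 1) * k + k ≤ q * k := by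
        have : (j - 1) + 1 ≤ q := by omega
        calc (j-1)*k + k = ((j-1)+1)*k := by ring
        _ ≤ q * k := Nat.mul_le_mul_right k this
      have hslt : i * k + a + 1 < (j - 1) * k + b + 1 := by omega
      simp only [eG, edgesIn, Finset.mem_coe, Finset.mem_filter, Finset.mem_product, Finset.mem_Icc]
      refine ⟨⟨⟨by omega, by omega⟩, ⟨by omega, by omega⟩⟩, hslt, Or.inl ⟨hslt, ?_⟩⟩
      rw [hress, hrest]; omega
    · rintro ⟨⟨a, b⟩, ⟨i, j⟩⟩ hx ⟨⟨a', b'⟩, ⟨i', j'⟩⟩ hy heq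
      simp only [hP, hQ, Finset.mem_coe, Finset.mem_product, Finset.mem_filter,
        Finset.mem_range] at hx hy
      obtain ⟨⟨⟨ha, hb⟩, hab⟩, ⟨⟨hi, hj⟩, hij⟩⟩ := hx
      obtain ⟨⟨⟨ha', hb'⟩, hab'⟩, ⟨⟨hi', hj'⟩, hij'⟩⟩ := hy
      simp only [Prod.mk.injEq] at heq
      obtain ⟨h1, h2⟩ := heq
      have e1 : i * k + a = i' * k + a' := by omega
      have e2 : (j-1) * k + b = (j'-1) * k + b' := by omega
      have hmod : ∀ x y : ℕ, y < k → (x * k + y) % k = y := by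
        intro x y hy
        rw [Nat.add_comm, Nat.add_mul_mod_self_right]
        exact Nat.mod_eq_of_lt hy
      have ea : a = a' := by
        have h := congrArg (· % k) e1
        simpa [hmod _ _ ha, hmod _ _ ha'] using h
      have eb : b = b' := by
        have h := congrArg (· % k) e2
        simpa [hmod _ _ hb, hmod _ _ hb'] using h
      have ei : i = i' := by
        have : i * k = i' * k := by omega
        exact Nat.eq_of_mul_eq_mul_right (by omega) this
      have ej : j = j' := by
        have : (j-1) * k = (j'-1) * k := by omega
        have := Nat.eq_of_mul_eq_mul_right (show 0 < k by omega) this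
        omega
      simp [ea, eb, ei, ej]
  have hcards : (P ×ˢ Q).card = P.card * Q.card := Finset.card_product P Q
  have h1 := card_pairs k
  have h2 := card_pairs (q + 1)
  calc k * (k - 1) * ((q + 1) * (q + 1 - 1)) = (2 * P.card) * (2 * Q.card) := by rw [h1, h2]
    _ = 4 * (P ×ˢ Q).card := by rw [hcards]; ring
    _ ≤ 4 * eG (Tk' k) n := by omega

theorem statement_2 (k : ℕ) (hk : 2 ≤ k) :
    (1 / 4 : ℝ) * (1 - 1 / (k : ℝ)) ≤
      Filter.liminf (fun n => (eG (Tk' k) n : ℝ) / (n : ℝ) ^ 2) Filter.atTop := by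
  have hk0 : (0:ℝ) < (k:ℝ) := by positivity
  set f : ℕ → ℝ := fun n => (eG (Tk' k) n : ℝ) / (n : ℝ) ^ 2 with hf
  set g : ℕ → ℝ := fun n => ((k:ℝ) * ((k:ℝ) - 1) / 4) * (1/(k:ℝ) - 1/(n:ℝ))^2 with hg
  have hgf : ∀ n, k ≤ n → g n ≤ f n := by
    intro n hn
    have hn0 : (0:ℝ) < (n:ℝ) := by
      have : 0 < n := by omega
      exact_mod_cast this
    have hlow := eG_lower k n (by omega)
    set q := n / k with hq
    have hcast : (k:ℝ) * ((k:ℝ) - 1) * (((q:ℝ) + 1) * (q:ℝ)) ≤ 4 * (eG (Tk' k) n : ℝ) := by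
      have h1 : ((k * (k-1) * ((q+1) * q) : ℕ) : ℝ) ≤ ((4 * eG (Tk' k) n : ℕ) : ℝ) := by
        exact_mod_cast hlow
      push_cast at h1
      have hk1 : ((k - 1 : ℕ) : ℝ) = (k:ℝ) - 1 := by
        have : 1 ≤ k := by omega
        push_cast [this]; ring
      rw [hk1] at h1
      linarith
    have hnq : (n:ℝ) / (k:ℝ) - 1 ≤ (q:ℝ) := by
      have hlt : n < (q + 1) * k := by
        have hmod := Nat.mod_lt n (show 0 < k by omega)
        calc n = k * q + n % k := (Nat.div_add_mod n k).symm
          _ < k * q + k := Nat.add_lt_add_left hmod _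
          _ = (q + 1) * k := by ring
      have hc : (n:ℝ) < ((q:ℝ) + 1) * (k:ℝ) := by exact_mod_cast hlt
      rw [div_sub_one (ne_of_gt hk0), div_le_iff₀ hk0]
      nlinarith
    have hq0 : (0:ℝ) ≤ (n:ℝ)/(k:ℝ) - 1 := by
      rw [sub_nonneg, le_div_iff₀ hk0]
      have : (k:ℝ) ≤ (n:ℝ) := by exact_mod_cast hn
      linarith
    have hX : ((n:ℝ)/(k:ℝ) - 1)^2 ≤ (q:ℝ) * ((q:ℝ)+1) := by nlinarith
    show ((k:ℝ) * ((k:ℝ) - 1) / 4) * (1/(k:ℝ) - 1/(n:ℝ))^2 ≤ (eG (Tk' k) n : ℝ) / (n : ℝ) ^ 2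
    rw [le_div_iff₀ (by positivity)]
    have hid : (1/(k:ℝ) - 1/(n:ℝ)) * (n:ℝ) = (n:ℝ)/(k:ℝ) - 1 := by
      field_simp
    have : ((k:ℝ) * ((k:ℝ) - 1) / 4) * (1/(k:ℝ) - 1/(n:ℝ))^2 * (n:ℝ)^2
        = ((k:ℝ) * ((k:ℝ) - 1) / 4) * (((1/(k:ℝ) - 1/(n:ℝ)) * (n:ℝ))^2) := by ring
    rw [this, hid]
    have hknn : (0:ℝ) ≤ (k:ℝ) * ((k:ℝ) - 1) := by
      have : (1:ℝ) ≤ (k:ℝ) := by exact_mod_cast (by omega : 1 ≤ k)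
      nlinarith
    nlinarith
  have hgtend : Filter.Tendsto g Filter.atTop
      (nhds (((k:ℝ) * ((k:ℝ) - 1) / 4) * (1/(k:ℝ) - 0)^2)) := by
    apply Filter.Tendsto.const_mul
    apply Filter.Tendsto.pow
    exact (tendsto_const_nhds.sub tendsto_one_div_atTop_nhds_zero_nat)
  have hL : ((k:ℝ) * ((k:ℝ) - 1) / 4) * (1/(k:ℝ) - 0)^2 = (1/4 : ℝ) * (1 - 1/(k:ℝ)) := by
    field_simp
    ring
  rw [hL] at hgtend
  have hliminfg : Filter.liminf g Filter.atTop = (1/4 : ℝ) * (1 - 1/(k:ℝ)) :=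
    hgtend.liminf_eq
  rw [← hliminfg]
  apply Filter.liminf_le_liminf
  · exact Filter.eventually_atTop.2 ⟨k, hgf⟩
  · have hk1 : (1:ℝ) ≤ (k:ℝ) := by exact_mod_cast (show 1 ≤ k by omega)
    have hC : (0:ℝ) ≤ (k:ℝ) * ((k:ℝ) - 1) / 4 := by nlinarith
    exact Filter.isBoundedUnder_of ⟨0, fun n => mul_nonneg hC (sq_nonneg _)⟩
  · apply Filter.isCoboundedUnder_ge_of_eventually_le Filter.atTop (x := 1)
    refine Filter.eventually_atTop.2 ⟨1, ?_⟩
    intro n hn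
    show (eG (Tk' k) n : ℝ) / (n : ℝ) ^ 2 ≤ 1
    have hn0 : (0:ℝ) < (n:ℝ)^2 := by positivity
    rw [div_le_one hn0]
    have hcard : eG (Tk' k) n ≤ n * n := by
      have : eG (Tk' k) n ≤ (Finset.Icc 1 n ×ˢ Finset.Icc 1 n).card :=
        Finset.card_filter_le _ _
      simpa [Finset.card_product, Nat.card_Icc] using this
    have : (eG (Tk' k) n : ℝ) ≤ (n:ℝ) * (n:ℝ) := by exact_mod_cast hcard
    nlinarith
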